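/- Let g be the standard normal density, γ > 0, η ∈ ℝ, and x·ξ < 0 a fixed real number (writing m = x·ξ). Then ∫_{−∞}^{m} [log(1 + u²/(e^{2η}γ)) − log(1 + (u−m)²/(e^{2η}γ))] g(u) du < ∫_0^∞ [log(1 + (w−m)²/(e^{2η}γ)) − log(1 + w²/(e^{2η}γ))] g(w) dw. -/

import Mathlib

open Real MeasureTheory

section Aux

lemma aux_int_sq : Integrable (fun x : ℝ => x ^ 2 * Real.exp (-(1/2 : ℝ) * x ^ 2)) := by
  have h := integrable_rpow_mul_exp_neg_mul_sq (b := (1/2 : ℝ)) (by norm_num)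
    (s := (2 : ℝ)) (by norm_num)
  have e : (fun x : ℝ => x ^ (2 : ℝ) * Real.exp (-(1/2 : ℝ) * x ^ 2)) =
      fun x : ℝ => x ^ 2 * Real.exp (-(1/2 : ℝ) * x ^ 2) := by
    funext x
    rw [show ((2 : ℝ) = ((2 : ℕ) : ℝ)) by norm_num, Real.rpow_natCast]
  rwa [e] at h

lemma aux_int_exp : Integrable (fun x : ℝ => Real.exp (-(1/2 : ℝ) * x ^ 2)) :=
  integrable_exp_neg_mul_sq (by norm_num)

/-- Integrability of a shifted quadratic times a gaussian. -/
lemma aux_int_shift (d K : ℝ) :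
    Integrable (fun x : ℝ => K * (x + d) ^ 2 *
      ((Real.sqrt (2 * Real.pi))⁻¹ * Real.exp (-(x ^ 2) / 2))) := by
  have hmaj : Integrable (fun x : ℝ =>
      |K| * (Real.sqrt (2 * Real.pi))⁻¹ *
        (2 * (x ^ 2 * Real.exp (-(1/2 : ℝ) * x ^ 2)) +
         2 * d ^ 2 * Real.exp (-(1/2 : ℝ) * x ^ 2))) :=
    ((aux_int_sq.const_mul 2).add (aux_int_exp.const_mul (2 * d ^ 2))).const_mul _
  refine hmaj.mono' ?_ ?_
  · exact (Continuous.aestronglyMeasurable (by continuity))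
  · filter_upwards with x
    have he : Real.exp (-(x ^ 2) / 2) = Real.exp (-(1/2 : ℝ) * x ^ 2) := by ring_nf
    have hb : (x + d) ^ 2 ≤ 2 * x ^ 2 + 2 * d ^ 2 := by nlinarith [sq_nonneg (x - d)]
    rw [Real.norm_eq_abs, abs_mul, abs_mul, he]
    have h1 : |(Real.sqrt (2 * Real.pi))⁻¹ * Real.exp (-(1/2 : ℝ) * x ^ 2)| =
        (Real.sqrt (2 * Real.pi))⁻¹ * Real.exp (-(1/2 : ℝ) * x ^ 2) := by
      rw [abs_of_nonneg]; positivity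
    rw [h1, abs_of_nonneg (sq_nonneg (x + d))]
    calc |K| * (x + d) ^ 2 * ((Real.sqrt (2 * Real.pi))⁻¹ * Real.exp (-(1/2 : ℝ) * x ^ 2))
        ≤ |K| * (2 * x ^ 2 + 2 * d ^ 2) *
            ((Real.sqrt (2 * Real.pi))⁻¹ * Real.exp (-(1/2 : ℝ) * x ^ 2)) := by
          apply mul_le_mul_of_nonneg_right _ (by positivity)
          exact mul_le_mul_of_nonneg_left hb (abs_nonneg K)
      _ = |K| * (Real.sqrt (2 * Real.pi))⁻¹ *
            (2 * (x ^ 2 * Real.exp (-(1/2 : ℝ) * x ^ 2)) +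
             2 * d ^ 2 * Real.exp (-(1/2 : ℝ) * x ^ 2)) := by ring

end Aux

set_option maxHeartbeats 1600000 in
/-- For the standard normal density `g`, `γ > 0`, `η ∈ ℝ` and `m = x·ξ < 0`,
`∫_{−∞}^{m} [log(1 + u²/(e^{2η}γ)) − log(1 + (u−m)²/(e^{2η}γ))] g(u) du
  < ∫_0^∞ [log(1 + (w−m)²/(e^{2η}γ)) − log(1 + w²/(e^{2η}γ))] g(w) dw`. -/
theorem gaussian_log_kernel_tail_comparison (γ η m : ℝ) (hγ : 0 < γ) (hm : m < 0)
    (g : ℝ → ℝ) (hg : ∀ u : ℝ, g u = (Real.sqrt (2 * Real.pi))⁻¹ * Real.exp (-(u ^ 2) / 2)) :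
    (∫ u in Set.Iic m,
        (Real.log (1 + u ^ 2 / (Real.exp (2 * η) * γ)) -
          Real.log (1 + (u - m) ^ 2 / (Real.exp (2 * η) * γ))) * g u) <
      ∫ w in Set.Ioi (0 : ℝ),
        (Real.log (1 + (w - m) ^ 2 / (Real.exp (2 * η) * γ)) -
          Real.log (1 + w ^ 2 / (Real.exp (2 * η) * γ))) * g w := by
  have hgfun : g = fun u : ℝ => (Real.sqrt (2 * Real.pi))⁻¹ * Real.exp (-(u ^ 2) / 2) :=
    funext hg
  subst hgfun
  set c : ℝ := Real.exp (2 * η) * γ with hc_def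
  have hc : 0 < c := by positivity
  -- notation
  set G : ℝ → ℝ := fun u : ℝ => (Real.sqrt (2 * Real.pi))⁻¹ * Real.exp (-(u ^ 2) / 2) with hG_def
  have hGpos : ∀ u, 0 < G u := fun u => by rw [hG_def]; positivity
  have hGcont : Continuous G := by rw [hG_def]; continuity
  set h : ℝ → ℝ := fun w => Real.log (1 + (w - m) ^ 2 / c) - Real.log (1 + w ^ 2 / c)
    with hh_def
  have hhcont : Continuous h := by
    rw [hh_def]
    apply Continuous.sub
    · apply Continuous.log (by continuity)
      intro x; positivity
    · apply Continuous.log (by continuity)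
      intro x; positivity
  -- step 1 : rewrite the left integral as an integral over Ioi 0
  have step1 : (∫ u in Set.Iic m,
      (Real.log (1 + u ^ 2 / c) - Real.log (1 + (u - m) ^ 2 / c)) * G u) =
      ∫ w in Set.Ioi (0 : ℝ), h w * G (w - m) := by
    have hneg := integral_comp_neg_Ioi (-m) (fun u : ℝ =>
      (Real.log (1 + u ^ 2 / c) - Real.log (1 + (u - m) ^ 2 / c)) * G u)
    rw [neg_neg] at hneg
    rw [← hneg]
    have T : MeasurableEmbedding (fun w : ℝ => w - m) :=
      (Homeomorph.subRight m).isClosedEmbedding.measurableEmbedding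
    have hmap : Measure.map (fun w : ℝ => w - m) volume = volume := by
      simpa [sub_eq_add_neg] using map_add_right_eq_self (volume : Measure ℝ) (-m)
    have hts := T.setIntegral_map (μ := volume)
      (fun z : ℝ => (Real.log (1 + (-z) ^ 2 / c) -
        Real.log (1 + (-z - m) ^ 2 / c)) * G (-z)) (Set.Ioi (-m))
    rw [hmap] at hts
    have hpre : (fun w : ℝ => w - m) ⁻¹' Set.Ioi (-m) = Set.Ioi (0 : ℝ) := by
      ext w
      simp only [Set.mem_preimage, Set.mem_Ioi]
      constructor <;> intro hw <;> linarith
    rw [hts, hpre]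
    apply setIntegral_congr_fun measurableSet_Ioi
    intro w _
    have hGe : G (-(w - m)) = G (w - m) := by rw [hG_def]; ring_nf
    have e1 : (-(w - m)) ^ 2 = (w - m) ^ 2 := by ring
    have e2 : (-(w - m) - m) ^ 2 = w ^ 2 := by ring
    simp only [hh_def]
    rw [hGe, e1, e2]
  rw [step1]
  show (∫ w in Set.Ioi (0 : ℝ), h w * G (w - m)) < ∫ w in Set.Ioi (0 : ℝ), h w * G w
  -- integrability
  have hI : ∀ b : ℝ, IntegrableOn (fun w => h w * G (w - b)) (Set.Ioi (0 : ℝ)) := by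
    intro b
    have hmaj : Integrable (fun w : ℝ => c⁻¹ * ((w - b) + (b - m)) ^ 2 *
        ((Real.sqrt (2 * Real.pi))⁻¹ * Real.exp (-((w - b) ^ 2) / 2))) :=
      (aux_int_shift (b - m) c⁻¹).comp_sub_right b
    refine (hmaj.integrableOn).mono' ?_ ?_
    · exact (hhcont.mul (hGcont.comp (by continuity))).aestronglyMeasurable.restrict
    · filter_upwards [ae_restrict_mem measurableSet_Ioi] with w hw
      simp only [Set.mem_Ioi] at hw
      have hwm : w < w - m := by linarith
      have hsq : w ^ 2 < (w - m) ^ 2 := by nlinarith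
      have hh0 : 0 ≤ h w := by
        rw [hh_def]
        have : Real.log (1 + w ^ 2 / c) ≤ Real.log (1 + (w - m) ^ 2 / c) := by
          apply Real.log_le_log (by positivity)
          exact add_le_add_right ((div_le_div_iff_of_pos_right hc).mpr hsq.le) 1
        linarith
      have hhle : h w ≤ (w - m) ^ 2 / c := by
        rw [hh_def]
        have h1 : Real.log (1 + (w - m) ^ 2 / c) ≤ (w - m) ^ 2 / c := by
          have := Real.log_le_sub_one_of_pos
            (show (0:ℝ) < 1 + (w - m) ^ 2 / c by positivity)
          linarith
        have h2 : 0 ≤ Real.log (1 + w ^ 2 / c) := by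
          apply Real.log_nonneg
          have : 0 ≤ w ^ 2 / c := by positivity
          linarith
        linarith
      have hGval : G (w - b) = (Real.sqrt (2 * Real.pi))⁻¹ * Real.exp (-((w - b) ^ 2) / 2) := by
        rw [hG_def]
      rw [Real.norm_eq_abs, abs_mul, abs_of_nonneg hh0, abs_of_pos (hGpos _), hGval]
      have hrw : c⁻¹ * ((w - b) + (b - m)) ^ 2 = (w - m) ^ 2 / c := by ring
      rw [hrw]
      exact mul_le_mul_of_nonneg_right hhle (by positivity)
  have hIa : IntegrableOn (fun w => h w * G (w - m)) (Set.Ioi (0 : ℝ)) := hI m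
  have hIb : IntegrableOn (fun w => h w * G w) (Set.Ioi (0 : ℝ)) := by
    have h0 := hI 0
    have e : (fun w => h w * G (w - 0)) = fun w => h w * G w := by
      funext w; rw [sub_zero]
    rwa [e] at h0
  -- strict inequality
  rw [← sub_pos, ← integral_sub hIb hIa]
  have hposint : ∀ w ∈ Set.Ioi (0:ℝ), 0 < h w * G w - h w * G (w - m) := by
    intro w hw
    simp only [Set.mem_Ioi] at hw
    have hwm : w < w - m := by linarith
    have hsq : w ^ 2 < (w - m) ^ 2 := by nlinarith
    have hhpos : 0 < h w := by
      rw [hh_def]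
      have : Real.log (1 + w ^ 2 / c) < Real.log (1 + (w - m) ^ 2 / c) := by
        apply Real.log_lt_log (by positivity)
        exact add_lt_add_right ((div_lt_div_iff_of_pos_right hc).mpr hsq) 1
      linarith
    have hG_lt : G (w - m) < G w := by
      rw [hG_def]
      apply mul_lt_mul_of_pos_left _ (by positivity)
      apply Real.exp_lt_exp.mpr
      linarith
    nlinarith
  have hnn : 0 ≤ᵐ[volume.restrict (Set.Ioi (0:ℝ))]
      (fun w => h w * G w - h w * G (w - m)) := by
    filter_upwards [ae_restrict_mem measurableSet_Ioi] with w hw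
    exact (hposint w hw).le
  refine (setIntegral_pos_iff_support_of_nonneg_ae hnn (hIb.sub hIa)).mpr ?_
  · have hsub : Set.Ioi (0:ℝ) ⊆ Function.support (fun w => h w * G w - h w * G (w - m)) ∩
        Set.Ioi (0:ℝ) := by
      intro w hw
      exact ⟨by simp [Function.mem_support]; exact (hposint w hw).ne', hw⟩
    calc (0 : ENNReal) < volume (Set.Ioi (0:ℝ)) := by simp [Real.volume_Ioi]
      _ ≤ _ := measure_mono hsub
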